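/- arXiv:2509.04027 — 2 statements merged into one kernel-verified Lean document; each statement's English description precedes it below -/
import Mathlib

section
/- Let Ω be a probability space, let Z and W be finite types, let μ be a probability measure on Z, let S = (S_1, …, S_n) : Ω → Z^n be a random sample whose law is the n-fold product μ^n, and let W : Ω → 𝒲 be a random hypothesis (possibly depending on S). Let ℓ : 𝒲 × Z → ℝ satisfy 0 ≤ ℓ(w, z) ≤ C_max for all w, z. Define the mutual information I(W; S) as the Kullback–Leibler divergence of the joint law of (W, S) from the product of the marginal laws of W and of S. Then |E[ ∫ ℓ(W, z) dμ(z) − (1/n)∑_{i=1}^n ℓ(W, S_i) ]| ≤ sqrt( C_max^2 · I(W; S) / (2n) ). -/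
open MeasureTheory

/-- The Kullback–Leibler divergence `KL(Q ‖ P) = ∫ log(dQ/dP) dQ` (as a real
number), expressed via the Radon–Nikodym derivative. -/
noncomputable def klDivReal {H : Type*} [MeasurableSpace H]
    (Q P : Measure H) : ℝ :=
  ∫ h, Real.log ((Q.rnDeriv P h).toReal) ∂Q

/-- The mutual information `I(X; Y)` of two random variables: the KL divergence
of the joint law of `(X, Y)` from the product of the marginal laws. -/
noncomputable def mutualInfoReal {Ω α β : Type*} [MeasurableSpace Ω]
    [MeasurableSpace α] [MeasurableSpace β]
    (ℙ : Measure Ω) (X : Ω → α) (Y : Ω → β) : ℝ :=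
  klDivReal (Measure.map (fun ω => (X ω, Y ω)) ℙ)
    ((Measure.map X ℙ).prod (Measure.map Y ℙ))



section XuRaginskyAux
open Real Finset


lemma core_posg {p : ℝ} (hp0 : 0 ≤ p) (hp1 : p ≤ 1) (v : ℝ) :
    0 < 1 - p + p * Real.exp v := by
  rcases lt_or_eq_of_le hp1 with h | h
  · have : 0 ≤ p * Real.exp v := mul_nonneg hp0 (Real.exp_pos v).le
    linarith
  · subst h; simpa using Real.exp_pos v

lemma core_bound {p : ℝ} (hp0 : 0 ≤ p) (hp1 : p ≤ 1) (v : ℝ) :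
    Real.log (1 - p + p * Real.exp v) - p * v ≤ v ^ 2 / 8 := by
  set g : ℝ → ℝ := fun v => 1 - p + p * Real.exp v with hg
  have hgpos : ∀ v, 0 < g v := core_posg hp0 hp1
  set f : ℝ → ℝ := fun v => Real.log (g v) - p * v with hf
  set f' : ℝ → ℝ := fun v => p * Real.exp v / g v - p with hf'
  have hgd : ∀ v, HasDerivAt g (p * Real.exp v) v := by
    intro v
    exact ((Real.hasDerivAt_exp v).const_mul p).const_add (1 - p)
  have hdf : ∀ v, HasDerivAt f (f' v) v := by
    intro v
    have h1 : HasDerivAt (fun v => Real.log (g v)) (p * Real.exp v / g v) v :=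
      (hgd v).log (hgpos v).ne'
    have h2 := h1.sub ((hasDerivAt_id v).const_mul p)
    rw [mul_one] at h2
    exact h2
  have hdf' : ∀ v, HasDerivAt f' (p * Real.exp v * (1 - p) / (g v) ^ 2) v := by
    intro v
    have hnum : HasDerivAt (fun v => p * Real.exp v) (p * Real.exp v) v :=
      (Real.hasDerivAt_exp v).const_mul p
    have h1 : HasDerivAt (fun v => p * Real.exp v / g v)
        ((p * Real.exp v * g v - p * Real.exp v * (p * Real.exp v)) / (g v) ^ 2) v :=
      hnum.div (hgd v) (hgpos v).ne'
    have heq : (p * Real.exp v * g v - p * Real.exp v * (p * Real.exp v)) / (g v) ^ 2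
        = p * Real.exp v * (1 - p) / (g v) ^ 2 := by
      congr 1; simp only [hg]; ring
    rw [heq] at h1
    simpa [hf'] using h1.sub_const p
  have hf''_le : ∀ v, p * Real.exp v * (1 - p) / (g v) ^ 2 ≤ 1 / 4 := by
    intro v
    rw [div_le_iff₀ (pow_pos (hgpos v) 2)]
    have h1 : (0:ℝ) ≤ ((1 - p) - p * Real.exp v) ^ 2 := sq_nonneg _
    simp only [hg]
    nlinarith
  have hmono : Monotone (fun v => v / 4 - f' v) := by
    apply monotone_of_deriv_nonneg
    · intro v
      exact ((hasDerivAt_id' v).div_const 4 |>.sub (hdf' v)).differentiableAt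
    · intro v
      rw [show deriv (fun v => v / 4 - f' v) v = _ from (((hasDerivAt_id' v)).div_const 4 |>.sub (hdf' v)).deriv]
      have h4 := hf''_le v
      linarith
  have hf'0 : f' 0 = 0 := by simp [hf', hg]
  have hf'le : ∀ v, 0 ≤ v → f' v ≤ v / 4 := by
    intro v hv
    have h := hmono hv
    simp only [hf'0, sub_zero, zero_div] at h
    linarith [h]
  have hf'ge : ∀ v, v ≤ 0 → v / 4 ≤ f' v := by
    intro v hv
    have h := hmono hv
    simp only [hf'0, sub_zero, zero_div] at h
    linarith [h]
  set F : ℝ → ℝ := fun v => v ^ 2 / 8 - f v with hFdef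
  have hF : ∀ v, HasDerivAt F (v / 4 - f' v) v := by
    intro v
    have h1 : HasDerivAt (fun v : ℝ => v ^ 2 / 8) ((2 : ℕ) * v ^ 1 / 8) v :=
      (hasDerivAt_pow 2 v).div_const 8
    have h2 : ((2 : ℕ) : ℝ) * v ^ 1 / 8 = v / 4 := by push_cast; ring
    rw [h2] at h1
    exact h1.sub (hdf v)
  have hFdiff : Differentiable ℝ F := fun v => (hF v).differentiableAt
  have hFcont : Continuous F := hFdiff.continuous
  have hf0 : f 0 = 0 := by simp [hf, hg]
  have hF0 : F 0 = 0 := by simp [hFdef, hf0]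
  have key : ∀ v, 0 ≤ F v := by
    intro v
    rcases le_total 0 v with hv | hv
    · have hm : MonotoneOn F (Set.Ici 0) := by
        apply monotoneOn_of_deriv_nonneg (convex_Ici 0) hFcont.continuousOn
        · intro x hx; exact (hF x).differentiableAt.differentiableWithinAt
        · intro x hx
          rw [interior_Ici] at hx
          rw [(hF x).deriv]
          have := hf'le x (le_of_lt hx)
          linarith
      have := hm (Set.self_mem_Ici) (Set.mem_Ici.mpr hv) hv
      rwa [hF0] at this
    · have hm : AntitoneOn F (Set.Iic 0) := by
        apply antitoneOn_of_deriv_nonpos (convex_Iic 0) hFcont.continuousOn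
        · intro x hx; exact (hF x).differentiableAt.differentiableWithinAt
        · intro x hx
          rw [interior_Iic] at hx
          rw [(hF x).deriv]
          have := hf'ge x (le_of_lt hx)
          linarith
      have := hm (Set.mem_Iic.mpr hv) (Set.self_mem_Iic) hv
      rwa [hF0] at this
  have h := key v
  simp only [hFdef, hf, hg] at h
  linarith


lemma hoeffding_fin {Z : Type*} [Fintype Z] (ν : Z → ℝ) (hν : ∀ z, 0 ≤ ν z)
    (hν1 : ∑ z, ν z = 1) (X : Z → ℝ) (hmean : ∑ z, ν z * X z = 0)
    {a b : ℝ} (hab : ∀ z, X z ∈ Set.Icc a b) (u : ℝ) :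
    ∑ z, ν z * Real.exp (u * X z) ≤ Real.exp (u ^ 2 * (b - a) ^ 2 / 8) := by
  -- Z is nonempty since ∑ ν = 1
  have hZ : Nonempty Z := by
    by_contra h
    rw [not_nonempty_iff] at h
    simp [Finset.univ_eq_empty] at hν1
  -- a ≤ 0 ≤ b
  have ha0 : a ≤ 0 := by
    have h1 : ∑ z, ν z * a ≤ ∑ z, ν z * X z :=
      Finset.sum_le_sum fun z _ => mul_le_mul_of_nonneg_left (hab z).1 (hν z)
    rw [hmean, ← Finset.sum_mul, hν1, one_mul] at h1
    exact h1
  have hb0 : 0 ≤ b := by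
    have h1 : ∑ z, ν z * X z ≤ ∑ z, ν z * b :=
      Finset.sum_le_sum fun z _ => mul_le_mul_of_nonneg_left (hab z).2 (hν z)
    rw [hmean, ← Finset.sum_mul, hν1, one_mul] at h1
    exact h1
  rcases eq_or_lt_of_le (le_trans ha0 hb0) with hA | hA
  · -- a = b = 0, X ≡ 0
    have ha : a = 0 := le_antisymm ha0 (hA ▸ hb0)
    have hb : b = 0 := hA ▸ ha
    have hXz : ∀ z, X z = 0 := fun z =>
      le_antisymm (hb ▸ (hab z).2) (ha ▸ (hab z).1)
    simp only [hXz, mul_zero, Real.exp_zero, mul_one, hν1]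
    exact Real.one_le_exp (by positivity)
  · -- a < b
    set p : ℝ := -a / (b - a) with hp
    have hba : 0 < b - a := by linarith
    have hp0 : 0 ≤ p := div_nonneg (by linarith) hba.le
    have hp1 : p ≤ 1 := by
      rw [div_le_one hba]; linarith
    set v : ℝ := u * (b - a) with hv
    -- convexity: exp (u * x) ≤ (b - x)/(b-a) * exp (u*a) + (x-a)/(b-a) * exp (u*b)
    have hconv : ∀ z, Real.exp (u * X z) ≤
        (b - X z) / (b - a) * Real.exp (u * a) + (X z - a) / (b - a) * Real.exp (u * b) := by
      intro z
      have hx := hab z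
      have hθ1 : (0:ℝ) ≤ (b - X z) / (b - a) := div_nonneg (by linarith [hx.2]) hba.le
      have hθ2 : (0:ℝ) ≤ (X z - a) / (b - a) := div_nonneg (by linarith [hx.1]) hba.le
      have hθ3 : (b - X z) / (b - a) + (X z - a) / (b - a) = 1 := by field_simp; ring
      have h1 := convexOn_exp.2 (Set.mem_univ (u * a)) (Set.mem_univ (u * b)) hθ1 hθ2 hθ3
      have h2 : (b - X z) / (b - a) * (u * a) + (X z - a) / (b - a) * (u * b) = u * X z := by
        field_simp; ring
      simp only [smul_eq_mul] at h1
      rw [h2] at h1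
      simpa using h1
    have hsum : ∑ z, ν z * Real.exp (u * X z) ≤
        b / (b - a) * Real.exp (u * a) + (-a) / (b - a) * Real.exp (u * b) := by
      have h1 : ∑ z, ν z * Real.exp (u * X z) ≤
          ∑ z, ν z * ((b - X z) / (b - a) * Real.exp (u * a)
            + (X z - a) / (b - a) * Real.exp (u * b)) :=
        Finset.sum_le_sum fun z _ => mul_le_mul_of_nonneg_left (hconv z) (hν z)
      refine h1.trans_eq ?_
      have expand : ∀ z, ν z * ((b - X z) / (b - a) * Real.exp (u * a)
            + (X z - a) / (b - a) * Real.exp (u * b))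
          = (ν z * b - ν z * X z) * (Real.exp (u * a) / (b - a))
            + (ν z * X z - ν z * a) * (Real.exp (u * b) / (b - a)) := by
        intro z; field_simp
      rw [Finset.sum_congr rfl fun z _ => expand z, Finset.sum_add_distrib,
        ← Finset.sum_mul, ← Finset.sum_mul]
      rw [Finset.sum_sub_distrib, Finset.sum_sub_distrib, hmean, ← Finset.sum_mul,
        ← Finset.sum_mul, hν1]
      field_simp
      try ring
    refine hsum.trans ?_
    -- rewrite RHS as exp(-p*v) * (1 - p + p * exp v)
    have hua : u * a = -(p * v) := by rw [hp, hv]; field_simp; try ring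
    have hub : u * b = -(p * v) + v := by rw [hp, hv]; field_simp; try ring
    have h1p : b / (b - a) = 1 - p := by rw [hp]; field_simp; try ring
    have hrw : b / (b - a) * Real.exp (u * a) + (-a) / (b - a) * Real.exp (u * b)
        = Real.exp (-(p * v)) * (1 - p + p * Real.exp v) := by
      rw [h1p, ← hp, hua, hub, Real.exp_add]
      ring
    rw [hrw]
    have hgpos : 0 < 1 - p + p * Real.exp v := core_posg hp0 hp1 v
    have hcb := core_bound hp0 hp1 v
    have h2 : Real.exp (-(p * v)) * (1 - p + p * Real.exp v)
        = Real.exp (Real.log (1 - p + p * Real.exp v) - p * v) := by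
      rw [Real.exp_sub, Real.exp_log hgpos, Real.exp_neg]
      ring
    rw [h2]
    have hvv : v ^ 2 = u ^ 2 * (b - a) ^ 2 := by rw [hv]; ring
    exact Real.exp_le_exp.mpr (by rw [← hvv] at *; linarith)


lemma gibbs_fin {H : Type*} [Fintype H] (q p : H → ℝ)
    (hq : ∀ x, 0 ≤ q x) (hp : ∀ x, 0 ≤ p x)
    (hqs : ∑ x, q x = 1) (hps : ∑ x, p x = 1)
    (hac : ∀ x, p x = 0 → q x = 0) (f : H → ℝ) :
    ∑ x, q x * f x ≤ (∑ x, q x * Real.log (q x / p x))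
      + Real.log (∑ x, p x * Real.exp (f x)) := by
  set T : ℝ := ∑ x, p x * Real.exp (f x) with hT
  have hTpos : 0 < T := by
    rw [hT]
    have hx : ∃ x, 0 < p x := by
      by_contra h
      push_neg at h
      have : ∀ x, p x = 0 := fun x => le_antisymm (h x) (hp x)
      simp [this] at hps
    obtain ⟨x0, hx0⟩ := hx
    apply Finset.sum_pos' (fun x _ => mul_nonneg (hp x) (Real.exp_pos _).le)
    exact ⟨x0, Finset.mem_univ x0, mul_pos hx0 (Real.exp_pos _)⟩
  -- termwise: q x * f x - q x * log (q x / p x) - q x * log T ≤ p x * exp (f x) / T - q x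
  have hterm : ∀ x, q x * f x - q x * Real.log (q x / p x) - q x * Real.log T
      ≤ p x * Real.exp (f x) / T - q x := by
    intro x
    rcases eq_or_lt_of_le (hq x) with h0 | hqx
    · rw [← h0]
      simp only [zero_mul, sub_zero, zero_sub, neg_zero]
      norm_num
      exact div_nonneg (mul_nonneg (hp x) (Real.exp_pos _).le) hTpos.le
    · have hpx : 0 < p x := by
        rcases eq_or_lt_of_le (hp x) with h | h
        · exact absurd (hac x h.symm) (ne_of_gt hqx)
        · exact h
      have hratio : 0 < p x * Real.exp (f x) / (T * q x) :=
        div_pos (mul_pos hpx (Real.exp_pos _)) (mul_pos hTpos hqx)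
      have hlog := Real.log_le_sub_one_of_pos hratio
      have hexp : Real.log (p x * Real.exp (f x) / (T * q x))
          = f x - Real.log (q x / p x) - Real.log T := by
        rw [Real.log_div (by positivity) (by positivity),
          Real.log_mul (ne_of_gt hpx) (Real.exp_ne_zero _),
          Real.log_mul (ne_of_gt hTpos) (ne_of_gt hqx),
          Real.log_div (ne_of_gt hqx) (ne_of_gt hpx), Real.log_exp]
        ring
      rw [hexp] at hlog
      have h2 : q x * (f x - Real.log (q x / p x) - Real.log T)
          ≤ q x * (p x * Real.exp (f x) / (T * q x) - 1) :=
        mul_le_mul_of_nonneg_left hlog (hq x)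
      have h3 : q x * (p x * Real.exp (f x) / (T * q x) - 1)
          = p x * Real.exp (f x) / T - q x := by
        field_simp
      rw [h3] at h2
      linarith [h2]
  have hsum := Finset.sum_le_sum (fun x (_ : x ∈ Finset.univ) => hterm x)
  have hL : ∑ x, (q x * f x - q x * Real.log (q x / p x) - q x * Real.log T)
      = (∑ x, q x * f x) - (∑ x, q x * Real.log (q x / p x)) - Real.log T := by
    rw [Finset.sum_sub_distrib, Finset.sum_sub_distrib, ← Finset.sum_mul, hqs, one_mul]
  have hR : ∑ x, (p x * Real.exp (f x) / T - q x) = 0 := by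
    rw [Finset.sum_sub_distrib, ← Finset.sum_div, ← hT, div_self hTpos.ne', hqs, sub_self]
  rw [hL, hR] at hsum
  linarith [hsum]

lemma kl_nonneg_fin {H : Type*} [Fintype H] (q p : H → ℝ)
    (hq : ∀ x, 0 ≤ q x) (hp : ∀ x, 0 ≤ p x)
    (hqs : ∑ x, q x = 1) (hps : ∑ x, p x = 1)
    (hac : ∀ x, p x = 0 → q x = 0) :
    0 ≤ ∑ x, q x * Real.log (q x / p x) := by
  have h := gibbs_fin q p hq hp hqs hps hac 0
  simp [hps] at h
  exact h

lemma optimize_lambda {A KL c : ℝ} (hKL : 0 ≤ KL) (hc : 0 ≤ c)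
    (hA : ∀ t : ℝ, 0 < t → A ≤ KL / t + t * c / 2) :
    A ≤ Real.sqrt (2 * c * KL) := by
  rcases eq_or_lt_of_le hc with hc0 | hc0
  · -- c = 0 : A ≤ KL / t for all t > 0, so A ≤ 0
    have h0 : A ≤ 0 := by
      by_contra h
      push_neg at h
      have ht := hA (2 * KL / A + 1) (by positivity)
      rw [← hc0, mul_zero, zero_div, add_zero] at ht
      have hexp : A * (2 * KL / A + 1) = 2 * KL + A := by field_simp
      have h2 : KL / (2 * KL / A + 1) < A := by
        rw [div_lt_iff₀ (by positivity)]
        nlinarith [hexp]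
      linarith
    exact h0.trans (Real.sqrt_nonneg _)
  rcases eq_or_lt_of_le hKL with hKL0 | hKL0
  · -- KL = 0 : A ≤ t*c/2 for all t > 0, so A ≤ 0
    have h0 : A ≤ 0 := by
      by_contra h
      push_neg at h
      have ht := hA (A / c) (by positivity)
      rw [← hKL0] at ht
      simp only [zero_div, zero_add] at ht
      rw [div_mul_eq_mul_div, mul_div_assoc, div_self hc0.ne', mul_one] at ht
      linarith
    exact h0.trans (Real.sqrt_nonneg _)
  · set t0 : ℝ := Real.sqrt (2 * KL / c) with ht0
    have ht0pos : 0 < t0 := Real.sqrt_pos.mpr (by positivity)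
    have h := hA t0 ht0pos
    have ht0sq : t0 ^ 2 = 2 * KL / c := Real.sq_sqrt (by positivity)
    have key : KL / t0 + t0 * c / 2 = Real.sqrt (2 * c * KL) := by
      have h1 : Real.sqrt (2 * c * KL) = t0 * c := by
        rw [← Real.sqrt_sq (by positivity : (0:ℝ) ≤ t0 * c)]
        congr 1
        rw [mul_pow, ht0sq]
        field_simp
      rw [h1]
      have h3 : t0 ^ 2 * c = 2 * KL := by
        rw [ht0sq]; field_simp
      have h2 : KL / t0 = t0 * c / 2 := by
        rw [div_eq_iff (ne_of_gt ht0pos)]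
        linear_combination -h3 / 2
      rw [h2]
      ring
    linarith [key ▸ h]


lemma sumexp_pos {H : Type*} [Fintype H] (p : H → ℝ) (hp : ∀ x, 0 ≤ p x)
    (hps : ∑ x, p x = 1) (f : H → ℝ) : 0 < ∑ x, p x * Real.exp (f x) := by
  have hx : ∃ x, 0 < p x := by
    by_contra h
    push_neg at h
    have : ∀ x, p x = 0 := fun x => le_antisymm (h x) (hp x)
    simp [this] at hps
  obtain ⟨x0, hx0⟩ := hx
  apply Finset.sum_pos' (fun x _ => mul_nonneg (hp x) (Real.exp_pos _).le)
  exact ⟨x0, Finset.mem_univ x0, mul_pos hx0 (Real.exp_pos _)⟩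

lemma dv_abs_bound {H : Type*} [Fintype H] (q p g : H → ℝ)
    (hq : ∀ x, 0 ≤ q x) (hp : ∀ x, 0 ≤ p x)
    (hqs : ∑ x, q x = 1) (hps : ∑ x, p x = 1)
    (hac : ∀ x, p x = 0 → q x = 0) {c : ℝ} (hc : 0 ≤ c)
    (hmgf : ∀ t : ℝ, ∑ x, p x * Real.exp (t * g x) ≤ Real.exp (t ^ 2 * c / 2)) :
    |∑ x, q x * g x| ≤ Real.sqrt (2 * c * (∑ x, q x * Real.log (q x / p x))) := by
  set E : ℝ := ∑ x, q x * g x with hE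
  set KL : ℝ := ∑ x, q x * Real.log (q x / p x) with hKL
  have hKL0 : 0 ≤ KL := kl_nonneg_fin q p hq hp hqs hps hac
  have main : ∀ s : ℝ, s * E ≤ KL + s ^ 2 * c / 2 := by
    intro s
    have hg := gibbs_fin q p hq hp hqs hps hac (fun x => s * g x)
    have hL : ∑ x, q x * (s * g x) = s * E := by
      rw [hE, Finset.mul_sum]; exact Finset.sum_congr rfl fun x _ => by ring
    rw [hL] at hg
    have hlog : Real.log (∑ x, p x * Real.exp (s * g x)) ≤ s ^ 2 * c / 2 := by
      rw [Real.log_le_iff_le_exp (sumexp_pos p hp hps _)]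
      exact hmgf s
    linarith
  have key : ∀ t : ℝ, 0 < t → |E| ≤ KL / t + t * c / 2 := by
    intro t ht
    have hid : t * (KL / t + t * c / 2) = KL + t ^ 2 * c / 2 := by
      field_simp
    have hEle : E ≤ KL / t + t * c / 2 := by
      rw [← mul_le_mul_iff_right₀ ht, hid]
      exact main t
    have hEge : -E ≤ KL / t + t * c / 2 := by
      rw [← mul_le_mul_iff_right₀ ht, hid]
      have := main (-t)
      nlinarith [this]
    exact abs_le.mpr ⟨by linarith, hEle⟩
  exact optimize_lambda hKL0 hc key


lemma mgf_product_bound {𝒲 Z : Type*} [Fintype 𝒲] [Fintype Z] (n : ℕ) (hn : 0 < n)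
    (aW : 𝒲 → ℝ) (ν : Z → ℝ) (haW : ∀ w, 0 ≤ aW w) (haW1 : ∑ w, aW w = 1)
    (hν : ∀ z, 0 ≤ ν z) (hν1 : ∑ z, ν z = 1)
    (ℓ : 𝒲 → Z → ℝ) (Cmax : ℝ) (hℓ : ∀ w z, ℓ w z ∈ Set.Icc (0:ℝ) Cmax) (t : ℝ) :
    ∑ x : 𝒲 × (Fin n → Z), (aW x.1 * ∏ i, ν (x.2 i)) *
      Real.exp (t * ((∑ z, ν z * ℓ x.1 z) - (1 / (n:ℝ)) * ∑ i, ℓ x.1 (x.2 i)))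
      ≤ Real.exp (t ^ 2 * (Cmax ^ 2 / (4 * (n:ℝ))) / 2) := by
  have hn' : (0:ℝ) < (n:ℝ) := Nat.cast_pos.mpr hn
  set B : ℝ := t ^ 2 * (Cmax ^ 2 / (4 * (n:ℝ))) / 2 with hB
  rw [Fintype.sum_prod_type]
  have inner_bound : ∀ w : 𝒲,
      ∑ s : Fin n → Z, (∏ i, ν (s i)) *
        Real.exp (t * ((∑ z, ν z * ℓ w z) - (1 / (n:ℝ)) * ∑ i, ℓ w (s i)))
      ≤ Real.exp B := by
    intro w
    obtain ⟨m, hm⟩ : ∃ m, ∑ z, ν z * ℓ w z = m := ⟨_, rfl⟩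
    rw [hm]
    set u : ℝ := t / (n:ℝ) with hu
    set X : Z → ℝ := fun z => m - ℓ w z with hX
    have hexp_split : ∀ s : Fin n → Z,
        (∏ i, ν (s i)) * Real.exp (t * (m - (1 / (n:ℝ)) * ∑ i, ℓ w (s i)))
        = ∏ i, (ν (s i) * Real.exp (u * X (s i))) := by
      intro s
      have h1 : t * (m - (1 / (n:ℝ)) * ∑ i, ℓ w (s i)) = ∑ i, u * X (s i) := by
        simp only [hX, hu, ← Finset.mul_sum]
        rw [Finset.sum_sub_distrib, Finset.sum_const, Finset.card_univ, Fintype.card_fin,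
          nsmul_eq_mul]
        field_simp
        try ring
        try tauto
      rw [h1, Real.exp_sum, ← Finset.prod_mul_distrib]
    rw [Finset.sum_congr rfl fun s _ => hexp_split s]
    have hfact : ∑ s : Fin n → Z, ∏ i, (ν (s i) * Real.exp (u * X (s i)))
        = ∏ _i : Fin n, ∑ z, ν z * Real.exp (u * X z) := by
      rw [← Finset.sum_prod_piFinset Finset.univ (fun _ z => ν z * Real.exp (u * X z)),
        Fintype.piFinset_univ]
    rw [hfact, Finset.prod_const, Finset.card_univ, Fintype.card_fin]
    have hmean : ∑ z, ν z * X z = 0 := by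
      simp only [hX, mul_sub, Finset.sum_sub_distrib]
      rw [← Finset.sum_mul, hν1, one_mul, hm, sub_self]
    have hXab : ∀ z, X z ∈ Set.Icc (m - Cmax) m := by
      intro z
      constructor
      · simp only [hX]; linarith [(hℓ w z).2]
      · simp only [hX]; linarith [(hℓ w z).1]
    have hhoef := hoeffding_fin ν hν hν1 X hmean hXab u
    have hsum_nonneg : 0 ≤ ∑ z, ν z * Real.exp (u * X z) :=
      Finset.sum_nonneg fun z _ => mul_nonneg (hν z) (Real.exp_pos _).le
    calc (∑ z, ν z * Real.exp (u * X z)) ^ n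
        ≤ (Real.exp (u ^ 2 * (m - (m - Cmax)) ^ 2 / 8)) ^ n :=
          pow_le_pow_left₀ hsum_nonneg hhoef n
      _ = Real.exp B := by
          rw [← Real.exp_nat_mul, hB, hu]
          congr 1
          field_simp
          ring
  calc ∑ w, ∑ s : Fin n → Z, (aW w * ∏ i, ν (s i)) *
        Real.exp (t * ((∑ z, ν z * ℓ w z) - (1 / (n:ℝ)) * ∑ i, ℓ w (s i)))
      = ∑ w, aW w * ∑ s : Fin n → Z, (∏ i, ν (s i)) *
          Real.exp (t * ((∑ z, ν z * ℓ w z) - (1 / (n:ℝ)) * ∑ i, ℓ w (s i))) := by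
        refine Finset.sum_congr rfl fun w _ => ?_
        rw [Finset.mul_sum]
        exact Finset.sum_congr rfl fun s _ => by ring
    _ ≤ ∑ w, aW w * Real.exp B :=
        Finset.sum_le_sum fun w _ => mul_le_mul_of_nonneg_left (inner_bound w) (haW w)
    _ = Real.exp B := by rw [← Finset.sum_mul, haW1, one_mul]

lemma sum_singleton_toReal {α : Type*} [Fintype α] [MeasurableSpace α]
    [MeasurableSingletonClass α] (μ : Measure α) [IsProbabilityMeasure μ] :
    ∑ x, (μ {x}).toReal = 1 := by
  have h1 : μ (⋃ x : α, {x}) = ∑' x : α, μ {x} :=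
    measure_iUnion (fun i j hij => by simp [Set.disjoint_singleton, hij])
      (fun x => measurableSet_singleton x)
  rw [Set.iUnion_of_singleton, measure_univ, tsum_fintype] at h1
  rw [← ENNReal.toReal_sum (fun x _ => measure_ne_top μ _), ← h1]
  simp


end XuRaginskyAux

/-- **Information-theoretic generalization bound (Xu–Raginsky).**
For a random hypothesis `W` learned from an i.i.d. sample `S ~ μ^n` over a
finite data space, and a loss `ℓ` with values in `[0, C_max]`, the expected
generalization gap is bounded by `sqrt(C_max² · I(W; S) / (2n))`. -/
theorem xu_raginsky_generalization_bound
    {Ω : Type*} [MeasurableSpace Ω] (ℙ : Measure Ω) [IsProbabilityMeasure ℙ]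
    {Z 𝒲 : Type*} [Fintype Z] [Fintype 𝒲]
    [MeasurableSpace Z] [MeasurableSingletonClass Z]
    [MeasurableSpace 𝒲] [MeasurableSingletonClass 𝒲]
    (μ : Measure Z) [IsProbabilityMeasure μ]
    (n : ℕ) (hn : 0 < n)
    (S : Ω → (Fin n → Z)) (hS : Measurable S)
    (hlaw : Measure.map S ℙ = Measure.pi fun _ : Fin n => μ)
    (W : Ω → 𝒲) (hW : Measurable W)
    (ℓ : 𝒲 → Z → ℝ) (Cmax : ℝ) (hℓ : ∀ w z, ℓ w z ∈ Set.Icc (0 : ℝ) Cmax) :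
    |∫ ω, ((∫ z, ℓ (W ω) z ∂μ) - (1 / n) * ∑ i, ℓ (W ω) (S ω i)) ∂ℙ| ≤
      Real.sqrt (Cmax ^ 2 * mutualInfoReal ℙ W S / (2 * n)) := by
  classical
  have hnR : (0:ℝ) < (n:ℝ) := Nat.cast_pos.mpr hn
  have hZne : Nonempty Z := by
    by_contra h
    rw [not_nonempty_iff] at h
    have h1 : μ Set.univ = 1 := measure_univ
    rw [Set.univ_eq_empty_iff.mpr h, measure_empty] at h1
    exact zero_ne_one h1
  have hΩne : Nonempty Ω := by
    by_contra h
    rw [not_nonempty_iff] at h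
    have h1 : ℙ Set.univ = 1 := measure_univ
    rw [Set.univ_eq_empty_iff.mpr h, measure_empty] at h1
    exact zero_ne_one h1
  have hCmax0 : 0 ≤ Cmax := by
    obtain ⟨z⟩ := hZne
    obtain ⟨ω⟩ := hΩne
    exact le_trans (hℓ (W ω) z).1 (hℓ (W ω) z).2
  have hWS : Measurable fun ω => (W ω, S ω) := hW.prodMk hS
  set Q : Measure (𝒲 × (Fin n → Z)) := Measure.map (fun ω => (W ω, S ω)) ℙ with hQdef
  set PW : Measure 𝒲 := Measure.map W ℙ with hPWdef
  set PS : Measure (Fin n → Z) := Measure.map S ℙ with hPSdef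
  set P : Measure (𝒲 × (Fin n → Z)) := PW.prod PS with hPdef
  haveI : IsProbabilityMeasure Q := Measure.isProbabilityMeasure_map hWS.aemeasurable
  haveI : IsProbabilityMeasure PW := Measure.isProbabilityMeasure_map hW.aemeasurable
  haveI : IsProbabilityMeasure PS := Measure.isProbabilityMeasure_map hS.aemeasurable
  set q : 𝒲 × (Fin n → Z) → ℝ := fun x => (Q {x}).toReal with hqdef
  set pf : 𝒲 × (Fin n → Z) → ℝ := fun x => (P {x}).toReal with hpdef
  set aW : 𝒲 → ℝ := fun w => (PW {w}).toReal with haWdef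
  set ν : Z → ℝ := fun z => (μ {z}).toReal with hνdef
  -- basic facts
  have hq0 : ∀ x, 0 ≤ q x := fun x => ENNReal.toReal_nonneg
  have hp0 : ∀ x, 0 ≤ pf x := fun x => ENNReal.toReal_nonneg
  have hqs : ∑ x, q x = 1 := sum_singleton_toReal Q
  have hps : ∑ x, pf x = 1 := sum_singleton_toReal P
  have haW0 : ∀ w, 0 ≤ aW w := fun w => ENNReal.toReal_nonneg
  have haW1 : ∑ w, aW w = 1 := sum_singleton_toReal PW
  have hν0 : ∀ z, 0 ≤ ν z := fun z => ENNReal.toReal_nonneg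
  have hν1 : ∑ z, ν z = 1 := sum_singleton_toReal μ
  -- product formula for P on singletons
  have hPx : ∀ x : 𝒲 × (Fin n → Z), P {x} = PW {x.1} * ∏ i, μ {x.2 i} := by
    intro x
    rw [hPdef, show ({x} : Set (𝒲 × (Fin n → Z))) = {x.1} ×ˢ {x.2} by
      rw [Set.singleton_prod_singleton], Measure.prod_prod, hlaw,
      ← Set.univ_pi_singleton x.2, Measure.pi_pi]
  have hpfx : ∀ x : 𝒲 × (Fin n → Z), pf x = aW x.1 * ∏ i, ν (x.2 i) := by
    intro x
    rw [hpdef]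
    simp only [hPx x, ENNReal.toReal_mul, ENNReal.toReal_prod]
    rfl
  -- absolute continuity pointwise
  have hQle : ∀ x : 𝒲 × (Fin n → Z), Q {x} ≤ PW {x.1} := by
    intro x
    rw [hQdef, Measure.map_apply hWS (measurableSet_singleton x),
      hPWdef, Measure.map_apply hW (measurableSet_singleton x.1)]
    apply measure_mono
    intro ω hω
    simp only [Set.mem_preimage, Set.mem_singleton_iff] at hω ⊢
    rw [← hω]
  have hQle2 : ∀ x : 𝒲 × (Fin n → Z), Q {x} ≤ PS {x.2} := by
    intro x
    rw [hQdef, Measure.map_apply hWS (measurableSet_singleton x),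
      hPSdef, Measure.map_apply hS (measurableSet_singleton x.2)]
    apply measure_mono
    intro ω hω
    simp only [Set.mem_preimage, Set.mem_singleton_iff] at hω ⊢
    rw [← hω]
  have hACpt : ∀ x : 𝒲 × (Fin n → Z), P {x} = 0 → Q {x} = 0 := by
    intro x hx
    rw [hPdef, show ({x} : Set (𝒲 × (Fin n → Z))) = {x.1} ×ˢ {x.2} by
      rw [Set.singleton_prod_singleton], Measure.prod_prod] at hx
    rcases mul_eq_zero.mp hx with h | h
    · exact le_antisymm (h ▸ hQle x) zero_le
    · exact le_antisymm (h ▸ hQle2 x) zero_le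
  have hac : ∀ x, pf x = 0 → q x = 0 := by
    intro x hx
    have h1 : P {x} = 0 := by
      rw [hpdef] at hx
      simpa [ENNReal.toReal_eq_zero_iff, measure_ne_top P] using hx
    rw [hqdef]
    simp [hACpt x h1]
  have hAC : Q ≪ P := by
    refine Measure.AbsolutelyContinuous.mk fun s hms h0 => ?_
    rw [← Set.biUnion_of_singleton s]
    refine (measure_biUnion_null_iff (Set.to_countable _)).2 fun x hx => ?_
    exact hACpt x (measure_mono_null (Set.singleton_subset_iff.2 hx) h0)
  -- rnDeriv pointwise
  have hpt : ∀ x : 𝒲 × (Fin n → Z), Q {x} = Q.rnDeriv P x * P {x} := by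
    intro x
    conv_lhs => rw [← Measure.withDensity_rnDeriv_eq Q P hAC]
    rw [withDensity_apply _ (measurableSet_singleton x), lintegral_singleton]
  have hqp : ∀ x, q x = (Q.rnDeriv P x).toReal * pf x := by
    intro x
    rw [hqdef, hpdef]
    simp only [hpt x, ENNReal.toReal_mul]
  -- mutual information = finite KL sum
  have hMI : mutualInfoReal ℙ W S = ∑ x, q x * Real.log (q x / pf x) := by
    rw [mutualInfoReal, klDivReal, ← hQdef, ← hPWdef, ← hPSdef, ← hPdef,
      integral_fintype (Integrable.of_finite)]
    refine Finset.sum_congr rfl fun x _ => ?_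
    rw [smul_eq_mul]
    rcases eq_or_ne (q x) 0 with h0 | h0
    · rw [show Q.real {x} = q x from rfl, h0, zero_mul, zero_mul]
    · have hpfx0 : pf x ≠ 0 := fun h => h0 (hac x h)
      have hr : (Q.rnDeriv P x).toReal = q x / pf x := by
        rw [eq_div_iff hpfx0]
        exact (hqp x).symm
      rw [show Q.real {x} = q x from rfl, hr]
  -- the generalization gap as a finite sum
  set G : 𝒲 × (Fin n → Z) → ℝ :=
    fun x => (∑ z, ν z * ℓ x.1 z) - (1 / (n:ℝ)) * ∑ i, ℓ x.1 (x.2 i) with hGdef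
  have hμint : ∀ w, ∫ z, ℓ w z ∂μ = ∑ z, ν z * ℓ w z := by
    intro w
    rw [integral_fintype (Integrable.of_finite)]
    simp [hνdef, smul_eq_mul]
    rfl
  have hgap : ∫ ω, ((∫ z, ℓ (W ω) z ∂μ) - (1 / n) * ∑ i, ℓ (W ω) (S ω i)) ∂ℙ
      = ∑ x, q x * G x := by
    have h1 : ∫ ω, ((∫ z, ℓ (W ω) z ∂μ) - (1 / n) * ∑ i, ℓ (W ω) (S ω i)) ∂ℙ
        = ∫ ω, G (W ω, S ω) ∂ℙ := by
      refine integral_congr_ae (Filter.Eventually.of_forall fun ω => ?_)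
      simp only [hGdef, hμint]
    rw [h1, ← integral_map hWS.aemeasurable (measurable_of_countable G).aestronglyMeasurable,
      ← hQdef, integral_fintype (Integrable.of_finite)]
    simp [smul_eq_mul]
    rfl
  -- MGF bound
  set c : ℝ := Cmax ^ 2 / (4 * (n:ℝ)) with hcdef
  have hc0 : 0 ≤ c := by positivity
  have hmgf : ∀ t : ℝ, ∑ x, pf x * Real.exp (t * G x) ≤ Real.exp (t ^ 2 * c / 2) := by
    intro t
    have := mgf_product_bound n hn aW ν haW0 haW1 hν0 hν1 ℓ Cmax hℓ t
    calc ∑ x, pf x * Real.exp (t * G x)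
        = ∑ x : 𝒲 × (Fin n → Z), (aW x.1 * ∏ i, ν (x.2 i)) *
            Real.exp (t * ((∑ z, ν z * ℓ x.1 z) - (1 / (n:ℝ)) * ∑ i, ℓ x.1 (x.2 i))) :=
          Finset.sum_congr rfl fun x _ => by rw [hpfx x]
      _ ≤ Real.exp (t ^ 2 * (Cmax ^ 2 / (4 * (n:ℝ))) / 2) := this
      _ = Real.exp (t ^ 2 * c / 2) := by rw [hcdef]
  -- conclude via Donsker–Varadhan
  have hdv := dv_abs_bound q pf G hq0 hp0 hqs hps hac hc0 hmgf
  rw [hgap, hMI]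
  refine hdv.trans_eq ?_
  congr 1
  rw [hcdef]
  field_simp
  ring
end

section
/- Let Ω be a probability space, let Z be a finite type with probability measure μ, let 𝒜 be a finite alphabet and m a positive integer, and set 𝒲 = 𝒜^m (token sequences of length m). Let S = (S_1, …, S_n) : Ω → Z^n be a random sample with law μ^n, let W : Ω → 𝒲 be a random policy output (possibly depending on S), and let ℓ : 𝒲 × Z → ℝ satisfy 0 ≤ ℓ(w, z) ≤ C_max. Then the expected reasoning generalization error satisfies |E[ ∫ ℓ(W, z) dμ(z) − (1/n)∑_{i=1}^n ℓ(W, S_i) ]| ≤ sqrt( C_max^2 · m · log|𝒜| / (2n) ). -/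
open MeasureTheory

open Real



/-- Core analytic inequality behind Hoeffding's lemma. -/
lemma hoeffding_core {p : ℝ} (hp0 : 0 ≤ p) (hp1 : p ≤ 1) (h : ℝ) :
    Real.log (1 - p + p * Real.exp h) ≤ p * h + h ^ 2 / 8 := by
  -- D x := 1 - p + p * exp x > 0
  have hD : ∀ x : ℝ, 0 < 1 - p + p * Real.exp x := by
    intro x
    rcases eq_or_lt_of_le hp0 with h0 | h0
    · simp [← h0]
    · have := Real.exp_pos x; nlinarith
  set F : ℝ → ℝ := fun x => p * x + x ^ 2 / 8 - Real.log (1 - p + p * Real.exp x) with hF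
  set G : ℝ → ℝ := fun x => p + x / 4 - p * Real.exp x / (1 - p + p * Real.exp x) with hG
  have hFd : ∀ x : ℝ, HasDerivAt F (G x) x := by
    intro x
    have h1 : HasDerivAt (fun x : ℝ => 1 - p + p * Real.exp x) (p * Real.exp x) x := by
      simpa using (((Real.hasDerivAt_exp x).const_mul p).const_add (1 - p))
    have h2 : HasDerivAt (fun x : ℝ => Real.log (1 - p + p * Real.exp x))
        (p * Real.exp x / (1 - p + p * Real.exp x)) x := h1.log (hD x).ne'
    have h3 : HasDerivAt (fun x : ℝ => p * x + x ^ 2 / 8) (p + x * 2 / 8) x := by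
      have := ((hasDerivAt_pow 2 x).div_const 8).const_add (p * x)
      have h4 : HasDerivAt (fun y : ℝ => p * y) p x := by simpa using (hasDerivAt_id x).const_mul p
      exact (h4.add ((hasDerivAt_pow 2 x).div_const 8)).congr_deriv (by norm_num; ring)
    have := h3.sub h2
    exact this.congr_deriv (by simp only [hG]; ring)
  have hGd : ∀ x : ℝ, HasDerivAt G
      (1 / 4 - (1 - p) * (p * Real.exp x) / (1 - p + p * Real.exp x) ^ 2) x := by
    intro x
    have h1 : HasDerivAt (fun x : ℝ => 1 - p + p * Real.exp x) (p * Real.exp x) x := by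
      simpa using (((Real.hasDerivAt_exp x).const_mul p).const_add (1 - p))
    have h2 : HasDerivAt (fun x : ℝ => p * Real.exp x) (p * Real.exp x) x :=
      (Real.hasDerivAt_exp x).const_mul p
    have h3 := h2.div h1 (hD x).ne'
    have h4 : HasDerivAt (fun y : ℝ => p + y / 4) (1 / 4) x := by
      simpa using ((hasDerivAt_id x).div_const 4).const_add p
    have := h4.sub h3
    exact this.congr_deriv (by field_simp; ring)
  -- second derivative nonneg: q(1-q) ≤ 1/4
  have hG' : ∀ x : ℝ, 0 ≤ 1 / 4 - (1 - p) * (p * Real.exp x) / (1 - p + p * Real.exp x) ^ 2 := by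
    intro x
    have hDx := hD x
    rw [sub_nonneg, div_le_iff₀ (by positivity)]
    nlinarith [sq_nonneg (1 - p - p * Real.exp x), Real.exp_pos x]
  have hGmono : Monotone G :=
    monotone_of_deriv_nonneg (fun x => (hGd x).differentiableAt)
      (fun x => by rw [(hGd x).deriv]; exact hG' x)
  have hG0 : G 0 = 0 := by simp [hG]
  -- F is monotone on [0,∞) and antitone on (-∞,0]
  have hFc : Continuous F :=
    continuous_iff_continuousAt.2 fun x => (hFd x).differentiableAt.continuousAt
  have hFmono : MonotoneOn F (Set.Ici 0) := by
    apply monotoneOn_of_deriv_nonneg (convex_Ici 0) hFc.continuousOn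
      (fun x _ => (hFd x).differentiableAt.differentiableWithinAt)
    intro x hx
    rw [(hFd x).deriv]
    rw [← hG0]
    exact hGmono (le_of_lt (by simpa using hx))
  have hFanti : AntitoneOn F (Set.Iic 0) := by
    apply antitoneOn_of_deriv_nonpos (convex_Iic 0) hFc.continuousOn
      (fun x _ => (hFd x).differentiableAt.differentiableWithinAt)
    intro x hx
    rw [(hFd x).deriv]
    rw [← hG0]
    exact hGmono (le_of_lt (by simpa using hx))
  have hF0 : F 0 = 0 := by simp [hF]
  have hFx : 0 ≤ F h := by
    rcases le_total 0 h with hh | hh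
    · rw [← hF0]; exact hFmono (by simp) (by simpa using hh) hh
    · rw [← hF0]; exact hFanti (by simpa using hh) (by simp) hh
  have := hFx
  simp only [hF] at this
  linarith

lemma exp_core {p : ℝ} (hp0 : 0 ≤ p) (hp1 : p ≤ 1) (h : ℝ) :
    (1 - p) * Real.exp (-p * h) + p * Real.exp ((1 - p) * h) ≤ Real.exp (h ^ 2 / 8) := by
  have hD : 0 < 1 - p + p * Real.exp h := by
    rcases eq_or_lt_of_le hp0 with h0 | h0
    · simp [← h0]
    · have := Real.exp_pos h; nlinarith
  have key := hoeffding_core hp0 hp1 h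
  have h1 : 1 - p + p * Real.exp h ≤ Real.exp (p * h + h ^ 2 / 8) := by
    rw [← Real.exp_log hD]; exact Real.exp_le_exp.2 key
  have h2 : (1 - p) * Real.exp (-p * h) + p * Real.exp ((1 - p) * h)
      = Real.exp (-p * h) * (1 - p + p * Real.exp h) := by
    have e : Real.exp ((1 - p) * h) = Real.exp (-p * h) * Real.exp h := by
      rw [← Real.exp_add]; ring_nf
    rw [e]; ring
  rw [h2]
  calc Real.exp (-p * h) * (1 - p + p * Real.exp h)
      ≤ Real.exp (-p * h) * Real.exp (p * h + h ^ 2 / 8) :=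
        mul_le_mul_of_nonneg_left h1 (Real.exp_pos _).le
    _ = Real.exp (h ^ 2 / 8) := by rw [← Real.exp_add]; ring_nf

/-- Hoeffding's lemma on a finite probability space. -/
lemma mgf_bound {Z : Type*} [Fintype Z] [MeasurableSpace Z] [MeasurableSingletonClass Z]
    (μ : Measure Z) [IsProbabilityMeasure μ] (Y : Z → ℝ) (C : ℝ)
    (hY : ∀ z, Y z ∈ Set.Icc (0 : ℝ) C) (t : ℝ) :
    ∫ z, Real.exp (t * ((∫ z', Y z' ∂μ) - Y z)) ∂μ ≤ Real.exp (t ^ 2 * C ^ 2 / 8) := by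
  have hne : Nonempty Z := by
    by_contra h
    have : (Set.univ : Set Z) = ∅ := Set.univ_eq_empty_iff.2 (not_nonempty_iff.1 h)
    have h1 := measure_univ (μ := μ)
    rw [this] at h1
    simp at h1
  set b : ℝ := ∫ z', Y z' ∂μ with hb
  have hint : ∀ f : Z → ℝ, Integrable f μ := fun f => .of_finite
  have hC0 : 0 ≤ C := le_trans (hY (Classical.arbitrary _)).1 (hY (Classical.arbitrary _)).2
  have hb0 : 0 ≤ b := integral_nonneg fun z => (hY z).1
  have hbC : b ≤ C := by
    calc b ≤ ∫ _, C ∂μ := integral_mono (hint Y) (hint _) fun z => (hY z).2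
    _ = C := by simp
  rcases eq_or_lt_of_le hC0 with hC | hC
  · have hY0 : ∀ z, Y z = 0 := fun z => le_antisymm (by rw [hC]; exact (hY z).2) (hY z).1
    have hb' : b = 0 := by rw [hb]; simp [hY0]
    simp only [hb', hY0, sub_zero, mul_zero, Real.exp_zero, integral_const, measure_univ,
      ENNReal.toReal_one, smul_eq_mul, mul_one, probReal_univ]
    exact Real.one_le_exp (by positivity)
  -- C > 0 case
  set p : ℝ := (C - b) / C with hp
  have hp0 : 0 ≤ p := div_nonneg (by linarith) hC.le
  have hp1 : p ≤ 1 := by rw [hp, div_le_one hC]; linarith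
  set h : ℝ := t * C with hh
  have chord : ∀ z, Real.exp (t * (b - Y z)) ≤
      (Y z / C) * Real.exp (t * (b - C)) + ((C - Y z) / C) * Real.exp (t * b) := by
    intro z
    have hθ0 : (0:ℝ) ≤ Y z / C := div_nonneg (hY z).1 hC.le
    have hθ1 : (0:ℝ) ≤ (C - Y z) / C := div_nonneg (by linarith [(hY z).2]) hC.le
    have hsum : Y z / C + (C - Y z) / C = 1 := by field_simp; ring
    have := convexOn_exp.2 (Set.mem_univ (t * (b - C))) (Set.mem_univ (t * b)) hθ0 hθ1 hsum
    simp only [smul_eq_mul] at this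
    have e : t * (b - Y z) = Y z / C * (t * (b - C)) + (C - Y z) / C * (t * b) := by
      field_simp; ring
    rw [e]; exact this
  calc ∫ z, Real.exp (t * (b - Y z)) ∂μ
      ≤ ∫ z, ((Y z / C) * Real.exp (t * (b - C)) + ((C - Y z) / C) * Real.exp (t * b)) ∂μ :=
        integral_mono (hint _) (hint _) chord
    _ = (b / C) * Real.exp (t * (b - C)) + ((C - b) / C) * Real.exp (t * b) := by
        rw [integral_add (hint _) (hint _)]
        have e1 : ∫ z, Y z / C * Real.exp (t * (b - C)) ∂μ = b / C * Real.exp (t * (b - C)) := by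
          rw [integral_mul_const, integral_div, ← hb]
        have e2 : ∫ z, (C - Y z) / C * Real.exp (t * b) ∂μ = (C - b) / C * Real.exp (t * b) := by
          rw [integral_mul_const, integral_div, integral_sub (hint _) (hint _), ← hb]
          simp
        rw [e1, e2]
    _ = (1 - p) * Real.exp (-p * h) + p * Real.exp ((1 - p) * h) := by
        rw [hp, hh]
        congr 2 <;> field_simp <;> ring
    _ ≤ Real.exp (h ^ 2 / 8) := exp_core hp0 hp1 h
    _ = Real.exp (t ^ 2 * C ^ 2 / 8) := by rw [hh]; ring_nf

lemma prod_mgf {Z : Type*} [Fintype Z] [MeasurableSpace Z] [MeasurableSingletonClass Z]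
    (μ : Measure Z) [IsProbabilityMeasure μ] (n : ℕ) (hn : 0 < n)
    (Y : Z → ℝ) (C : ℝ) (hY : ∀ z, Y z ∈ Set.Icc (0 : ℝ) C) (t : ℝ) :
    ∫ s : Fin n → Z, Real.exp (t * ((∫ z, Y z ∂μ) - (1 / n) * ∑ i, Y (s i)))
        ∂(Measure.pi fun _ : Fin n => μ)
      ≤ Real.exp (t ^ 2 * C ^ 2 / (8 * n)) := by
  letI : MeasureSpace Z := ⟨μ⟩
  haveI : IsProbabilityMeasure (volume : Measure Z) := ‹IsProbabilityMeasure μ›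
  have hn' : (n : ℝ) ≠ 0 := Nat.cast_ne_zero.2 hn.ne'
  have hpt : ∀ s : Fin n → Z,
      Real.exp (t * ((∫ z, Y z ∂μ) - (1 / n) * ∑ i, Y (s i)))
        = ∏ i : Fin n, Real.exp ((t / n) * ((∫ z, Y z ∂μ) - Y (s i))) := by
    intro s
    rw [← Real.exp_sum]
    congr 1
    rw [← Finset.mul_sum, Finset.sum_sub_distrib, Finset.sum_const, Finset.card_univ,
      Fintype.card_fin]
    field_simp
    ring_nf
    try exact Or.inl trivial
  have hvol : (Measure.pi fun _ : Fin n => μ) = (volume : Measure (Fin n → Z)) := by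
    rw [volume_pi]; rfl
  rw [hvol]
  simp only [hpt]
  rw [← hvol]
  rw [MeasureTheory.integral_fintype_prod_eq_prod (𝕜 := ℝ) (ι := Fin n)
    (f := fun _ x => Real.exp ((t / n) * ((∫ z, Y z ∂μ) - Y x)))]
  have hfac : ∀ i : Fin n, (∫ x : Z, Real.exp ((t / n) * ((∫ z, Y z ∂μ) - Y x)))
      ≤ Real.exp ((t / n) ^ 2 * C ^ 2 / 8) := by
    intro _
    exact mgf_bound μ Y C hY (t / n)
  calc ∏ _i : Fin n, (∫ x : Z, Real.exp ((t / n) * ((∫ z, Y z ∂μ) - Y x)))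
      ≤ ∏ _i : Fin n, Real.exp ((t / n) ^ 2 * C ^ 2 / 8) :=
        Finset.prod_le_prod (fun i _ => integral_nonneg fun x => (Real.exp_pos _).le)
          (fun i _ => hfac i)
    _ = Real.exp (t ^ 2 * C ^ 2 / (8 * n)) := by
        rw [Finset.prod_const, Finset.card_univ, Fintype.card_fin, ← Real.exp_nat_mul]
        congr 1
        field_simp

lemma exp_integral_le {T : Type*} [Fintype T] [MeasurableSpace T] [MeasurableSingletonClass T]
    (ν : Measure T) [IsProbabilityMeasure ν] (f : T → ℝ) :
    Real.exp (∫ x, f x ∂ν) ≤ ∫ x, Real.exp (f x) ∂ν := by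
  have hw1 : ∑ x : T, (ν {x}).toReal = 1 := by
    have h := integral_fintype (μ := ν) (f := fun _ => (1 : ℝ)) .of_finite
    change ∑ x : T, ν.real {x} = 1
    simpa using h.symm
  rw [integral_fintype .of_finite, integral_fintype .of_finite]
  have := convexOn_exp.map_sum_le (t := Finset.univ) (w := fun x : T => (ν {x}).toReal)
    (p := f) (fun i _ => ENNReal.toReal_nonneg) hw1 (fun i _ => Set.mem_univ _)
  simp only [smul_eq_mul]; exact this

lemma max_bound {T I : Type*} [Fintype T] [MeasurableSpace T] [MeasurableSingletonClass T]
    [Fintype I] [Nonempty I] (ν : Measure T) [IsProbabilityMeasure ν]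
    (f : I → T → ℝ) (v : ℝ) (hv : 0 ≤ v)
    (hmgf : ∀ i (t : ℝ), ∫ s, Real.exp (t * f i s) ∂ν ≤ Real.exp (t ^ 2 * v)) :
    ∫ s, Finset.univ.sup' Finset.univ_nonempty (fun i => f i s) ∂ν
      ≤ Real.sqrt (4 * v * Real.log (Fintype.card I)) := by
  set M : T → ℝ := fun s => Finset.univ.sup' Finset.univ_nonempty (fun i => f i s) with hM
  set K : ℕ := Fintype.card I with hK
  have hK1 : (1 : ℝ) ≤ K := by exact_mod_cast Fintype.card_pos
  have hlogK : 0 ≤ Real.log K := Real.log_nonneg hK1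
  -- key claim: for all t > 0, ∫ M ≤ log K / t + t * v
  have claim : ∀ t : ℝ, 0 < t → ∫ s, M s ∂ν ≤ Real.log K / t + t * v := by
    intro t ht
    have h1 : Real.exp (t * ∫ s, M s ∂ν) ≤ ∫ s, Real.exp (t * M s) ∂ν := by
      have := exp_integral_le ν (fun s => t * M s)
      rwa [integral_const_mul] at this
    have h2 : ∀ s, Real.exp (t * M s) ≤ ∑ i : I, Real.exp (t * f i s) := by
      intro s
      obtain ⟨i₀, _, hi₀⟩ := Finset.exists_mem_eq_sup' Finset.univ_nonempty (fun i => f i s)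
      have : Real.exp (t * M s) = Real.exp (t * f i₀ s) := by rw [hM]; simp only []; rw [hi₀]
      rw [this]
      exact Finset.single_le_sum (f := fun i => Real.exp (t * f i s))
        (fun i _ => (Real.exp_pos _).le) (Finset.mem_univ i₀)
    have h3 : ∫ s, Real.exp (t * M s) ∂ν ≤ (K : ℝ) * Real.exp (t ^ 2 * v) := by
      calc ∫ s, Real.exp (t * M s) ∂ν
          ≤ ∫ s, ∑ i : I, Real.exp (t * f i s) ∂ν :=
            integral_mono .of_finite .of_finite h2
        _ = ∑ i : I, ∫ s, Real.exp (t * f i s) ∂ν := integral_finset_sum _ fun i _ => .of_finite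
        _ ≤ ∑ _i : I, Real.exp (t ^ 2 * v) :=
            Finset.sum_le_sum fun i _ => hmgf i t
        _ = (K : ℝ) * Real.exp (t ^ 2 * v) := by
            rw [Finset.sum_const, Finset.card_univ]; simp [hK, nsmul_eq_mul]
    have h4 : Real.exp (t * ∫ s, M s ∂ν) ≤ (K : ℝ) * Real.exp (t ^ 2 * v) := h1.trans h3
    have h5 : t * ∫ s, M s ∂ν ≤ Real.log K + t ^ 2 * v := by
      have := Real.log_le_log (Real.exp_pos _) h4
      rwa [Real.log_exp, Real.log_mul (by positivity) (Real.exp_pos _).ne', Real.log_exp] at this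
    have h6 : ∫ s, M s ∂ν ≤ (Real.log K + t ^ 2 * v) / t := by
      rw [le_div_iff₀ ht]
      calc (∫ s, M s ∂ν) * t = t * ∫ s, M s ∂ν := by ring
        _ ≤ _ := h5
    calc ∫ s, M s ∂ν ≤ (Real.log K + t ^ 2 * v) / t := h6
      _ = Real.log K / t + t * v := by field_simp
  -- helper for degenerate cases
  have hle0 : (∀ ε : ℝ, 0 < ε → ∫ s, M s ∂ν ≤ ε) →
      ∫ s, M s ∂ν ≤ Real.sqrt (4 * v * Real.log K) := by
    intro h
    have h0 : ∫ s, M s ∂ν ≤ 0 :=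
      le_of_forall_pos_le_add fun ε hε => by simpa using h ε hε
    exact h0.trans (Real.sqrt_nonneg _)
  rcases eq_or_lt_of_le hv with hv0 | hv0
  · -- v = 0
    apply hle0
    intro ε hε
    rcases eq_or_lt_of_le hlogK with hl0 | hl0
    · have := claim 1 one_pos
      rw [← hl0, ← hv0] at this
      simpa using this.trans (by linarith)
    · have ht : 0 < Real.log K / ε := div_pos hl0 hε
      have := claim _ ht
      rw [← hv0] at this
      calc ∫ s, M s ∂ν ≤ Real.log ↑K / (Real.log ↑K / ε) + Real.log ↑K / ε * 0 := this
        _ = ε := by field_simp; ring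
  · rcases eq_or_lt_of_le hlogK with hl0 | hl0
    · -- log K = 0
      apply hle0
      intro ε hε
      have ht : 0 < ε / v := div_pos hε hv0
      have := claim _ ht
      rw [← hl0] at this
      calc ∫ s, M s ∂ν ≤ 0 / (ε / v) + ε / v * v := this
        _ = ε := by field_simp; ring
    · -- main case : v > 0, log K > 0
      set a := Real.sqrt (Real.log K) with hA
      set bb := Real.sqrt v with hB
      have ha : 0 < a := Real.sqrt_pos.2 hl0
      have hbb : 0 < bb := Real.sqrt_pos.2 hv0
      have ha2 : a ^ 2 = Real.log K := Real.sq_sqrt hl0.le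
      have hb2 : bb ^ 2 = v := Real.sq_sqrt hv0.le
      have ht : 0 < a / bb := div_pos ha hbb
      have hcl := claim _ ht
      have heq : Real.log ↑K / (a / bb) + a / bb * v = 2 * a * bb := by
        rw [← ha2, ← hb2]
        field_simp
        ring
      have hsq : Real.sqrt (4 * v * Real.log ↑K) = 2 * a * bb := by
        rw [show (4 : ℝ) * v * Real.log ↑K = (2 * a * bb) ^ 2 by
          rw [show (2 * a * bb) ^ 2 = 4 * a ^ 2 * bb ^ 2 from by ring, ha2, hb2]; ring]
        exact Real.sqrt_sq (by positivity)
      rw [hsq]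
      rw [heq] at hcl
      exact hcl


/-- **Information-theoretic generalization upper bound for LLM reasoning.**
For a policy whose output `W` is a chain-of-thought of `m` tokens over a finite
dictionary `𝒜`, trained on an i.i.d. sample `S ~ μ^n` of `n` queries from a
finite query space, with reasoning loss `ℓ` bounded in `[0, C_max]`, the
expected reasoning generalization error satisfies
`|E[R(W) − R̂_n(W)]| ≤ sqrt(C_max² · m · log|𝒜| / (2n))`. -/
theorem reasoning_generalization_bound
    {Ω : Type*} [MeasurableSpace Ω] (ℙ : Measure Ω) [IsProbabilityMeasure ℙ]
    {Z : Type*} [Fintype Z] [MeasurableSpace Z] [MeasurableSingletonClass Z]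
    {𝒜 : Type*} [Fintype 𝒜] [MeasurableSpace 𝒜] [MeasurableSingletonClass 𝒜]
    (m : ℕ) (hm : 0 < m)
    (μ : Measure Z) [IsProbabilityMeasure μ]
    (n : ℕ) (hn : 0 < n)
    (S : Ω → (Fin n → Z)) (hS : Measurable S)
    (hlaw : Measure.map S ℙ = Measure.pi fun _ : Fin n => μ)
    (W : Ω → (Fin m → 𝒜)) (hW : Measurable W)
    (ℓ : (Fin m → 𝒜) → Z → ℝ) (Cmax : ℝ)
    (hℓ : ∀ w z, ℓ w z ∈ Set.Icc (0 : ℝ) Cmax) :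
    |∫ ω, ((∫ z, ℓ (W ω) z ∂μ) - (1 / n) * ∑ i, ℓ (W ω) (S ω i)) ∂ℙ| ≤
      Real.sqrt (Cmax ^ 2 * (m * Real.log (Fintype.card 𝒜)) / (2 * n)) := by
  classical
  -- basic nonemptiness and positivity facts
  have hneZ : Nonempty Z := by
    by_contra h
    have h1 := measure_univ (μ := μ)
    rw [Set.univ_eq_empty_iff.2 (not_nonempty_iff.1 h)] at h1
    simp at h1
  have hneΩ : Nonempty Ω := by
    by_contra h
    have h1 := measure_univ (μ := ℙ)
    rw [Set.univ_eq_empty_iff.2 (not_nonempty_iff.1 h)] at h1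
    simp at h1
  have hne𝒲 : Nonempty (Fin m → 𝒜) := ⟨W (Classical.arbitrary Ω)⟩
  have hC0 : 0 ≤ Cmax :=
    le_trans (hℓ (Classical.arbitrary _) (Classical.arbitrary _)).1
      (hℓ (Classical.arbitrary _) (Classical.arbitrary _)).2
  have hn' : (n : ℝ) ≠ 0 := Nat.cast_ne_zero.2 hn.ne'
  set ν : Measure (Fin n → Z) := Measure.pi fun _ : Fin n => μ with hν
  set g : (Fin m → 𝒜) → (Fin n → Z) → ℝ :=
    fun w s => (∫ z, ℓ w z ∂μ) - (1 / n) * ∑ i, ℓ w (s i) with hg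
  set v : ℝ := Cmax ^ 2 / (8 * n) with hv
  have hv0 : 0 ≤ v := by positivity
  -- bounds on the two parts of g
  have hint : ∀ f : Z → ℝ, Integrable f μ := fun f => .of_finite
  have hRmem : ∀ w, (∫ z, ℓ w z ∂μ) ∈ Set.Icc (0 : ℝ) Cmax := by
    intro w
    constructor
    · exact integral_nonneg fun z => (hℓ w z).1
    · calc (∫ z, ℓ w z ∂μ) ≤ ∫ _, Cmax ∂μ :=
            integral_mono (hint _) (hint _) fun z => (hℓ w z).2
        _ = Cmax := by simp
  have hSmem : ∀ w (s : Fin n → Z),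
      ((1 : ℝ) / n) * ∑ i, ℓ w (s i) ∈ Set.Icc (0 : ℝ) Cmax := by
    intro w s
    constructor
    · exact mul_nonneg (by positivity) (Finset.sum_nonneg fun i _ => (hℓ w (s i)).1)
    · have h1 : ∑ i, ℓ w (s i) ≤ (n : ℝ) * Cmax := by
        calc ∑ i, ℓ w (s i) ≤ ∑ _i : Fin n, Cmax :=
              Finset.sum_le_sum fun i _ => (hℓ w (s i)).2
          _ = (n : ℝ) * Cmax := by
              rw [Finset.sum_const, Finset.card_univ, Fintype.card_fin, nsmul_eq_mul]
      calc ((1 : ℝ) / n) * ∑ i, ℓ w (s i) ≤ ((1 : ℝ) / n) * ((n : ℝ) * Cmax) :=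
            mul_le_mul_of_nonneg_left h1 (by positivity)
        _ = Cmax := by field_simp
  have hgabs : ∀ w s, |g w s| ≤ Cmax := by
    intro w s
    rw [abs_le]
    constructor
    · have := (hRmem w).1; have := (hSmem w s).2; simp only [hg]; linarith
    · have := (hRmem w).2; have := (hSmem w s).1; simp only [hg]; linarith
  -- MGF bounds for g and -g
  have hmgf : ∀ w (t : ℝ), ∫ s, Real.exp (t * g w s) ∂ν ≤ Real.exp (t ^ 2 * v) := by
    intro w t
    have := prod_mgf μ n hn (ℓ w) Cmax (hℓ w) t
    rw [hν, hg]
    calc ∫ s : Fin n → Z, Real.exp (t * ((∫ z, ℓ w z ∂μ) - (1 / n) * ∑ i, ℓ w (s i)))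
          ∂(Measure.pi fun _ : Fin n => μ) ≤ Real.exp (t ^ 2 * Cmax ^ 2 / (8 * n)) := this
      _ = Real.exp (t ^ 2 * v) := by rw [hv]; ring_nf
  have hmgf' : ∀ w (t : ℝ), ∫ s, Real.exp (t * (-(g w s))) ∂ν ≤ Real.exp (t ^ 2 * v) := by
    intro w t
    have := hmgf w (-t)
    simpa [neg_mul, mul_neg, neg_neg] using this
  -- the two sup functions
  set M : (Fin n → Z) → ℝ :=
    fun s => Finset.univ.sup' Finset.univ_nonempty (fun w => g w s) with hM
  set M' : (Fin n → Z) → ℝ :=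
    fun s => Finset.univ.sup' Finset.univ_nonempty (fun w => -(g w s)) with hM'
  have hMax : ∫ s, M s ∂ν ≤ Real.sqrt (4 * v * Real.log (Fintype.card (Fin m → 𝒜))) :=
    max_bound ν (fun w s => g w s) v hv0 hmgf
  have hMax' : ∫ s, M' s ∂ν ≤ Real.sqrt (4 * v * Real.log (Fintype.card (Fin m → 𝒜))) :=
    max_bound ν (fun w s => -(g w s)) v hv0 hmgf'
  -- measurability and integrability over Ω
  have hmeasg : Measurable fun ω => g (W ω) (S ω) :=
    (measurable_of_countable (fun p : (Fin m → 𝒜) × (Fin n → Z) => g p.1 p.2)).comp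
      (hW.prodMk hS)
  have hintg : Integrable (fun ω => g (W ω) (S ω)) ℙ := by
    refine Integrable.mono' (integrable_const Cmax) hmeasg.aestronglyMeasurable ?_
    exact Filter.Eventually.of_forall fun ω => hgabs _ _
  have hMabs : ∀ s, |M s| ≤ Cmax := by
    intro s
    rw [abs_le]
    obtain ⟨w₀⟩ := hne𝒲
    constructor
    · calc -Cmax ≤ g w₀ s := by have := hgabs w₀ s; rw [abs_le] at this; exact this.1
        _ ≤ M s := Finset.le_sup' (fun w => g w s) (Finset.mem_univ w₀)
    · exact Finset.sup'_le _ _ fun w _ => by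
        have := hgabs w s; rw [abs_le] at this; exact this.2
  have hM'abs : ∀ s, |M' s| ≤ Cmax := by
    intro s
    rw [abs_le]
    obtain ⟨w₀⟩ := hne𝒲
    constructor
    · calc -Cmax ≤ -(g w₀ s) := by have := hgabs w₀ s; rw [abs_le] at this; linarith [this.2]
        _ ≤ M' s := Finset.le_sup' (fun w => -(g w s)) (Finset.mem_univ w₀)
    · exact Finset.sup'_le _ _ fun w _ => by
        have := hgabs w s; rw [abs_le] at this; linarith [this.1]
  have hintM : Integrable (fun ω => M (S ω)) ℙ := by
    refine Integrable.mono' (integrable_const Cmax)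
      (((measurable_of_countable M).comp hS).aestronglyMeasurable) ?_
    exact Filter.Eventually.of_forall fun ω => hMabs _
  have hintM' : Integrable (fun ω => M' (S ω)) ℙ := by
    refine Integrable.mono' (integrable_const Cmax)
      (((measurable_of_countable M').comp hS).aestronglyMeasurable) ?_
    exact Filter.Eventually.of_forall fun ω => hM'abs _
  -- transport integrals along the law of S
  have hpushM : ∫ ω, M (S ω) ∂ℙ = ∫ s, M s ∂ν := by
    rw [← hlaw, integral_map hS.aemeasurable
      (measurable_of_countable M).aestronglyMeasurable]
  have hpushM' : ∫ ω, M' (S ω) ∂ℙ = ∫ s, M' s ∂ν := by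
    rw [← hlaw, integral_map hS.aemeasurable
      (measurable_of_countable M').aestronglyMeasurable]
  -- one-sided bounds
  set B : ℝ := Real.sqrt (4 * v * Real.log (Fintype.card (Fin m → 𝒜))) with hB
  have hup : ∫ ω, g (W ω) (S ω) ∂ℙ ≤ B := by
    calc ∫ ω, g (W ω) (S ω) ∂ℙ ≤ ∫ ω, M (S ω) ∂ℙ :=
          integral_mono hintg hintM fun ω => Finset.le_sup' (fun w => g w (S ω)) (Finset.mem_univ (W ω))
      _ = ∫ s, M s ∂ν := hpushM
      _ ≤ B := hMax
  have hdown : -(∫ ω, g (W ω) (S ω) ∂ℙ) ≤ B := by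
    rw [← integral_neg]
    calc ∫ ω, -(g (W ω) (S ω)) ∂ℙ ≤ ∫ ω, M' (S ω) ∂ℙ :=
          integral_mono hintg.neg hintM' fun ω => Finset.le_sup' (fun w => -(g w (S ω))) (Finset.mem_univ (W ω))
      _ = ∫ s, M' s ∂ν := hpushM'
      _ ≤ B := hMax'
  -- identify B with the stated bound
  have hBeq : B = Real.sqrt (Cmax ^ 2 * (m * Real.log (Fintype.card 𝒜)) / (2 * n)) := by
    rw [hB, hv]
    congr 1
    rw [show (Fintype.card (Fin m → 𝒜)) = Fintype.card 𝒜 ^ m by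
      rw [Fintype.card_fun, Fintype.card_fin]]
    push_cast
    rw [Real.log_pow]
    push_cast
    field_simp
    ring
  have habs : |∫ ω, g (W ω) (S ω) ∂ℙ| ≤ B := abs_le.2 ⟨by linarith, hup⟩
  rw [hBeq] at habs
  exact habs
end
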